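/- The switching class of the complete multipartite graph K_{r,r,…,r} with parts of size r ≥ 3 contains no graph with trivial automorphism group: for every subset X of vertices, the switched graph σ_X(K_{r,…,r}) admits a non-identity automorphism. -/

import Mathlib

/-- Seidel switching of a simple graph `Γ` with respect to a set `X` of vertices:
adjacency between `X` and its complement is complemented, adjacency within `X`
or within the complement is unchanged. -/
def switching {Ω : Type*} (X : Set Ω) (Γ : SimpleGraph Ω) : SimpleGraph Ω where
  Adj u v := ((u ∈ X ↔ v ∈ X) ∧ Γ.Adj u v) ∨ (¬(u ∈ X ↔ v ∈ X) ∧ ¬Γ.Adj u v)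
  symm := by
    refine ⟨?_⟩
    intro u v h
    rcases h with ⟨h1, h2⟩ | ⟨h1, h2⟩
    · exact Or.inl ⟨h1.symm, h2.symm⟩
    · exact Or.inr ⟨fun h => h1 h.symm, fun h => h2 h.symm⟩
  loopless := by
    refine ⟨?_⟩
    intro u h
    rcases h with ⟨_, h⟩ | ⟨h, _⟩
    · exact Γ.loopless.irrefl u h
    · exact h Iff.rfl

theorem stmt9 {ι : Type*} [Nonempty ι] (r : ℕ) (hr : 3 ≤ r)
    (X : Set (Σ _ : ι, Fin r)) :
    ∃ g : Equiv.Perm (Σ _ : ι, Fin r), g ≠ 1 ∧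
      ∀ u v, (switching X (SimpleGraph.completeMultipartiteGraph (fun _ : ι => Fin r))).Adj (g u) (g v) ↔
        (switching X (SimpleGraph.completeMultipartiteGraph (fun _ : ι => Fin r))).Adj u v := by
  classical
  obtain ⟨i⟩ := ‹Nonempty ι›
  obtain ⟨a, b, hab, hX⟩ : ∃ a b : Fin r, a ≠ b ∧
      ((⟨i, a⟩ : Σ _ : ι, Fin r) ∈ X ↔ (⟨i, b⟩ : Σ _ : ι, Fin r) ∈ X) := by
    have htri : ((⟨i, ⟨0, by omega⟩⟩ : Σ _ : ι, Fin r) ∈ X ↔ (⟨i, ⟨1, by omega⟩⟩ : Σ _ : ι, Fin r) ∈ X) ∨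
        ((⟨i, ⟨0, by omega⟩⟩ : Σ _ : ι, Fin r) ∈ X ↔ (⟨i, ⟨2, by omega⟩⟩ : Σ _ : ι, Fin r) ∈ X) ∨
        ((⟨i, ⟨1, by omega⟩⟩ : Σ _ : ι, Fin r) ∈ X ↔ (⟨i, ⟨2, by omega⟩⟩ : Σ _ : ι, Fin r) ∈ X) := by
      tauto
    rcases htri with h | h | h
    · exact ⟨⟨0, by omega⟩, ⟨1, by omega⟩, Fin.ne_of_val_ne (by norm_num), h⟩
    · exact ⟨⟨0, by omega⟩, ⟨2, by omega⟩, Fin.ne_of_val_ne (by norm_num), h⟩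
    · exact ⟨⟨1, by omega⟩, ⟨2, by omega⟩, Fin.ne_of_val_ne (by norm_num), h⟩
  set p : Σ _ : ι, Fin r := ⟨i, a⟩
  set q : Σ _ : ι, Fin r := ⟨i, b⟩
  have hpq : p ≠ q := by
    intro h
    apply hab
    simpa [p, q] using h
  set g : Equiv.Perm (Σ _ : ι, Fin r) := Equiv.swap p q with hg
  have hfst : ∀ x, (g x).1 = x.1 := by
    intro x
    rw [hg, Equiv.swap_apply_def]
    split_ifs with h h <;> simp [h, p, q]
  have hmem : ∀ x, (g x ∈ X ↔ x ∈ X) := by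
    intro x
    rw [hg, Equiv.swap_apply_def]
    split_ifs with h h <;> simp [h]
    · exact hX.symm
    · exact hX
  refine ⟨g, ?_, ?_⟩
  · intro h
    have : g p = p := by rw [h]; rfl
    rw [hg, Equiv.swap_apply_left] at this
    exact hpq this.symm
  · intro u v
    have key : ∀ x y : Σ _ : ι, Fin r,
        (switching X (SimpleGraph.completeMultipartiteGraph (fun _ : ι => Fin r))).Adj x y ↔
          ((x ∈ X ↔ y ∈ X) ∧ x.1 ≠ y.1) ∨ (¬(x ∈ X ↔ y ∈ X) ∧ ¬x.1 ≠ y.1) :=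
      fun x y => Iff.rfl
    rw [key, key, hfst u, hfst v]
    constructor <;> intro h <;>
      [rw [hmem u, hmem v] at h; rw [← hmem u, ← hmem v] at h] <;> exact h
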